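/- For every prime p and every polynomial A with integer coefficients, ∑_{n=0}^∞ n! · ((n+1)·A(n+1) − A(n)) = −A(0) in ℚ_p. -/

import Mathlib

open Nat Polynomial Filter

lemma padic_norm_factorial_tendsto_zero (p : ℕ) [hp : Fact p.Prime] :
    Tendsto (fun n : ℕ => ((n ! : ℚ_[p]))) atTop (nhds 0) := by
  rw [tendsto_zero_iff_norm_tendsto_zero]
  have hbound : ∀ n : ℕ, ‖((n ! : ℚ_[p]))‖ ≤ ((p : ℝ) ^ (n / p : ℕ))⁻¹ := by
    intro n
    have hdvd : (p : ℤ) ^ (n / p) ∣ ((n ! : ℕ) : ℤ) := by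
      have h1 : p ^ (padicValNat p (n !)) ∣ n ! := pow_padicValNat_dvd
      have h2 : n / p ≤ padicValNat p (n !) := by
        rw [padicValNat_factorial (b := Nat.log p n + 2) (by omega)]
        calc n / p = n / p ^ 1 := by rw [pow_one]
        _ ≤ ∑ i ∈ Finset.Ico 1 (Nat.log p n + 2), n / p ^ i := by
            apply Finset.single_le_sum (f := fun i => n / p ^ i)
            · intro i _; positivity
            · simp [Finset.mem_Ico]
      exact_mod_cast dvd_trans (pow_dvd_pow p h2) h1
    have := (Padic.norm_int_le_pow_iff_dvd ((n ! : ℕ) : ℤ) (n / p)).mpr hdvd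
    simpa [zpow_neg, zpow_natCast, -Int.natCast_ediv] using this
  have hlim : Tendsto (fun n : ℕ => ((p : ℝ) ^ (n / p : ℕ))⁻¹) atTop (nhds 0) := by
    have h1 : Tendsto (fun n : ℕ => n / p) atTop atTop := by
      apply tendsto_atTop_atTop.mpr
      intro b
      exact ⟨p * b, fun n hn => (Nat.le_div_iff_mul_le hp.out.pos).mpr (by rw [mul_comm]; exact hn)⟩
    have h2 : Tendsto (fun k : ℕ => ((p : ℝ) ^ k)⁻¹) atTop (nhds 0) := by
      have : Tendsto (fun k : ℕ => ((p : ℝ)⁻¹) ^ k) atTop (nhds 0) := by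
        apply tendsto_pow_atTop_nhds_zero_of_lt_one
        · positivity
        · rw [inv_lt_one_iff₀]; right; exact_mod_cast hp.out.one_lt
      simpa [inv_pow] using this
    exact h2.comp h1
  exact squeeze_zero (fun n => norm_nonneg _) hbound hlim

/-- For every prime `p` and every integer polynomial `A`,
`∑_{n=0}^∞ n!·((n+1)·A(n+1) − A(n)) = −A(0)` in `ℚ_p`. -/
theorem hasSum_telescoping_int_padic (p : ℕ) [Fact p.Prime] (A : Polynomial ℤ) :
    HasSum
      (fun n : ℕ => (n ! : ℚ_[p]) *
        ((((n : ℤ) + 1) * A.eval ((n : ℤ) + 1) - A.eval (n : ℤ) : ℤ) : ℚ_[p]))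
      (-((A.eval 0 : ℤ) : ℚ_[p])) := by
  set g : ℕ → ℚ_[p] := fun n => (n ! : ℚ_[p]) * ((A.eval (n : ℤ) : ℤ) : ℚ_[p]) with hg
  set t : ℕ → ℚ_[p] := fun n => (n ! : ℚ_[p]) *
      ((((n : ℤ) + 1) * A.eval ((n : ℤ) + 1) - A.eval (n : ℤ) : ℤ) : ℚ_[p]) with ht
  have hteq : ∀ n, t n = g (n + 1) - g n := by
    intro n
    simp only [ht, hg, Nat.factorial_succ]
    push_cast
    ring
  -- g tends to 0
  have hgnorm : ∀ n, ‖g n‖ ≤ ‖((n ! : ℚ_[p]))‖ := by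
    intro n
    rw [hg]
    simp only [norm_mul]
    calc ‖((n ! : ℚ_[p]))‖ * ‖((A.eval (n : ℤ) : ℤ) : ℚ_[p])‖
        ≤ ‖((n ! : ℚ_[p]))‖ * 1 :=
          mul_le_mul_of_nonneg_left (Padic.norm_int_le_one _) (norm_nonneg _)
      _ = ‖((n ! : ℚ_[p]))‖ := mul_one _
  have hg0 : Tendsto g atTop (nhds 0) := by
    rw [tendsto_zero_iff_norm_tendsto_zero]
    have := (tendsto_zero_iff_norm_tendsto_zero).mp (padic_norm_factorial_tendsto_zero p)
    exact squeeze_zero (fun n => norm_nonneg _) hgnorm this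
  -- t tends to 0
  have ht0 : Tendsto t atTop (nhds 0) := by
    have : Tendsto (fun n => g (n + 1) - g n) atTop (nhds (0 - 0)) :=
      ((hg0.comp (tendsto_add_atTop_nat 1)).sub hg0)
    simpa [funext hteq] using this
  -- summable
  have hsummable : Summable t := by
    apply NonarchimedeanAddGroup.summable_of_tendsto_cofinite_zero
    rwa [Nat.cofinite_eq_atTop]
  have hhs := hsummable.hasSum
  -- partial sums
  have hpartial : Tendsto (fun N => ∑ n ∈ Finset.range N, t n) atTop
      (nhds (-((A.eval 0 : ℤ) : ℚ_[p]))) := by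
    have heq : ∀ N, ∑ n ∈ Finset.range N, t n = g N - g 0 := by
      intro N
      simp only [funext hteq]
      exact Finset.sum_range_sub g N
    simp only [funext heq]
    have hg0val : g 0 = ((A.eval 0 : ℤ) : ℚ_[p]) := by simp [hg]
    rw [show (-((A.eval 0 : ℤ) : ℚ_[p])) = 0 - g 0 by rw [hg0val, zero_sub]]
    exact hg0.sub tendsto_const_nhds
  have := tendsto_nhds_unique hhs.tendsto_sum_nat hpartial
  rw [← this]
  exact hhs
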